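/- Let f be a unit-length grid drawing of the cycle graph C_6 on ZMod 6. Then there exist integers a, b such that the image of f equals either {a, a+1, a+2} × {b, b+1} or {a, a+1} × {b, b+1, b+2} (the six lattice points on the boundary of an axis-aligned 2 × 1 or 1 × 2 rectangle). In other words, every unit-length grid drawing of a 6-cycle is a rectangle of side lengths 2 and 1. -/

import Mathlib

/-- The four unit axis vectors in `ℤ × ℤ`. -/
def unitSteps : Set (ℤ × ℤ) := {(1, 0), (-1, 0), (0, 1), (0, -1)}

/-- A unit-length grid drawing of a simple graph: an injective map to lattice
points sending adjacent vertices to points at Euclidean distance 1. -/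
def IsUnitGridDrawing {V : Type*} (G : SimpleGraph V) (f : V → ℤ × ℤ) : Prop :=
  Function.Injective f ∧ ∀ u v : V, G.Adj u v → f u - f v ∈ unitSteps

/-- The cycle graph on `ZMod n`: `i` is adjacent to `i + 1` and `i - 1`. -/
def cycleGraph (n : ℕ) : SimpleGraph (ZMod n) :=
  SimpleGraph.fromRel (fun i j => j = i + 1)

open Fin.NatCast

def step6 : Fin 4 → ℤ × ℤ := ![(1,0),(-1,0),(0,1),(0,-1)]

def Ppos (c : Fin 6 → Fin 4) : ℕ → ℤ × ℤ
  | 0 => 0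
  | n+1 => Ppos c n + step6 (c n)

abbrev Goal (c : Fin 6 → Fin 4) : Prop :=
  Ppos c 6 = 0 → Function.Injective (fun k : Fin 6 => Ppos c k.val) →
    ∃ a ∈ Finset.Icc (-2:ℤ) 0, ∃ b ∈ Finset.Icc (-2:ℤ) 0,
      (Finset.image (fun k : Fin 6 => Ppos c k.val) Finset.univ =
        ({a, a+1, a+2} : Finset ℤ) ×ˢ ({b, b+1} : Finset ℤ) ∨
       Finset.image (fun k : Fin 6 => Ppos c k.val) Finset.univ =
        ({a, a+1} : Finset ℤ) ×ˢ ({b, b+1, b+2} : Finset ℤ))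

set_option maxRecDepth 100000 in
set_option maxHeartbeats 4000000 in
lemma key6' : ∀ a0 a1 a2 a3 a4 a5 : Fin 4, Goal ![a0,a1,a2,a3,a4,a5] := by decide

lemma key6 (c : Fin 6 → Fin 4) : Goal c := by
  have : c = ![c 0, c 1, c 2, c 3, c 4, c 5] := by
    funext i; fin_cases i <;> rfl
  rw [this]; exact key6' _ _ _ _ _ _

def idx4 (p : ℤ × ℤ) : Fin 4 :=
  if p = (1,0) then 0 else if p = (-1,0) then 1 else if p = (0,1) then 2 else 3

lemma step6_idx4 {p : ℤ × ℤ} (h : p ∈ unitSteps) : step6 (idx4 p) = p := by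
  simp only [unitSteps, Set.mem_insert_iff, Set.mem_singleton_iff] at h
  rcases h with rfl | rfl | rfl | rfl <;> rfl

lemma tri_img (x a : ℤ) :
    (fun t => x + t) '' {a, a+1, a+2} = ({x+a, x+a+1, x+a+2} : Set ℤ) := by
  simp [Set.image_insert_eq, ← add_assoc]

lemma two_img (x a : ℤ) :
    (fun t => x + t) '' {a, a+1} = ({x+a, x+a+1} : Set ℤ) := by
  simp [Set.image_insert_eq, ← add_assoc]

theorem six_cycle_drawing_is_two_by_one_rectangle
    (f : ZMod 6 → ℤ × ℤ) (hf : IsUnitGridDrawing (cycleGraph 6) f) :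
    ∃ a b : ℤ,
      Set.range f = ({a, a + 1, a + 2} : Set ℤ) ×ˢ ({b, b + 1} : Set ℤ) ∨
      Set.range f = ({a, a + 1} : Set ℤ) ×ˢ ({b, b + 1, b + 2} : Set ℤ) := by
  obtain ⟨hinj, hadj⟩ := hf
  set c : Fin 6 → Fin 4 :=
    fun k => idx4 (f ((k.val + 1 : ℕ) : ZMod 6) - f ((k.val : ℕ) : ZMod 6)) with hc
  have hstep : ∀ k : Fin 6,
      f ((k.val + 1 : ℕ) : ZMod 6) - f ((k.val : ℕ) : ZMod 6) = step6 (c k) := by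
    intro k
    rw [hc]
    refine (step6_idx4 (hadj _ _ ?_)).symm
    refine ⟨?_, Or.inr ?_⟩
    · intro h
      have h1 : ((k.val : ZMod 6) + 1 : ZMod 6) = (k.val : ZMod 6) := by
        push_cast at h; linear_combination h
      have : (1 : ZMod 6) = 0 := by linear_combination h1
      exact absurd this (by decide)
    · push_cast; ring
  have hP : ∀ n : ℕ, n ≤ 6 → f ((n : ℕ) : ZMod 6) = f 0 + Ppos c n := by
    intro n
    induction n with
    | zero => simp [Ppos]
    | succ n ih =>
      intro h
      have hn : n < 6 := h
      have hk := hstep ⟨n, hn⟩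
      simp only [Fin.val_mk] at hk
      have : (⟨n, hn⟩ : Fin 6) = (n : Fin 6) := by
        ext; simp [Fin.val_natCast, Nat.mod_eq_of_lt hn]
      rw [this] at hk
      have := ih (le_of_lt hn)
      rw [Ppos, ← hk, this]
      ring
  have hsum : Ppos c 6 = 0 := by
    have h6 := hP 6 le_rfl
    have : ((6 : ℕ) : ZMod 6) = 0 := by decide
    rw [this] at h6
    exact left_eq_add.mp h6
  have hginj : Function.Injective (fun k : Fin 6 => Ppos c k.val) := by
    intro j k h
    simp only at h
    have hj := hP j.val j.isLt.le
    have hk := hP k.val k.isLt.le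
    have : f ((j.val : ℕ) : ZMod 6) = f ((k.val : ℕ) : ZMod 6) := by rw [hj, hk, h]
    have h2 := hinj this
    have h3 := congrArg ZMod.val h2
    rw [ZMod.val_natCast_of_lt j.isLt, ZMod.val_natCast_of_lt k.isLt] at h3
    exact Fin.ext h3
  obtain ⟨a, ha, b, hb, hcase⟩ := key6 c hsum hginj
  have hrange : Set.range f =
      (fun p => f 0 + p) ''
        ((Finset.image (fun k : Fin 6 => Ppos c k.val) Finset.univ : Finset (ℤ × ℤ)) : Set (ℤ × ℤ)) := by
    ext p
    simp only [Set.mem_range, Finset.coe_image, Finset.coe_univ, Set.image_univ,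
      Set.mem_image, Set.mem_range]
    constructor
    · rintro ⟨v, rfl⟩
      refine ⟨Ppos c ((⟨v.val, v.val_lt⟩ : Fin 6) : Fin 6).val, ⟨⟨v.val, v.val_lt⟩, rfl⟩, ?_⟩
      have := hP v.val v.val_lt.le
      rw [ZMod.natCast_val, ZMod.cast_id] at this
      exact this.symm
    · rintro ⟨_, ⟨k, rfl⟩, rfl⟩
      exact ⟨((k.val : ℕ) : ZMod 6), hP k.val k.isLt.le⟩
  have hmap : (fun p : ℤ × ℤ => f 0 + p) =
      fun p : ℤ × ℤ => (((f 0).1 + ·) p.1, ((f 0).2 + ·) p.2) := rfl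
  rcases hcase with h | h
  · refine ⟨(f 0).1 + a, (f 0).2 + b, Or.inl ?_⟩
    rw [hrange, h]
    push_cast [Finset.coe_product]
    rw [hmap, ← Set.prod_image_image_eq, tri_img, two_img]
  · refine ⟨(f 0).1 + a, (f 0).2 + b, Or.inr ?_⟩
    rw [hrange, h]
    push_cast [Finset.coe_product]
    rw [hmap, ← Set.prod_image_image_eq, two_img, tri_img]
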